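/- Let y_t ∈ ℂ with Re[y_t] > 0 and let ε > 0 be a real number. Consider the real symmetric 5×5 block matrix G_{OYΔ} = [[Re[Y5], Re[Y6]], [Re[Y6]ᵀ, Re[Y4] + ε·I₃]], where Y4 = (y_t/3)·[[1,−1,0],[−1,2,−1],[0,−1,1]], Y5 = y_t·I₂, and Y6 = (y_t/√3)·[[−1,1,0],[0,−1,1]]. Then G_{OYΔ} is positive definite. -/

import Mathlib

open Matrix

set_option maxHeartbeats 1000000 in

/-- Key positive-definiteness claim in the proof of Theorem 4: the open-wye--open-delta
block `G_{OYΔ} = [[Re Y5, Re Y6], [Re Y6ᵀ, Re Y4 + ε I]]` is positive definite when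
`Re[y_t] > 0` and `ε > 0`. -/
theorem G_OYDelta_posDef (yt : ℂ) (h : 0 < yt.re) (ε : ℝ) (hε : 0 < ε)
    (Y4 : Matrix (Fin 3) (Fin 3) ℂ) (Y5 : Matrix (Fin 2) (Fin 2) ℂ)
    (Y6 : Matrix (Fin 2) (Fin 3) ℂ)
    (hY4 : Y4 = (yt / 3) • !![(1 : ℂ), -1, 0; -1, 2, -1; 0, -1, 1])
    (hY5 : Y5 = yt • (1 : Matrix (Fin 2) (Fin 2) ℂ))
    (hY6 : Y6 = (yt / (Real.sqrt 3 : ℂ)) • !![(-1 : ℂ), 1, 0; 0, -1, 1])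
    (G : Matrix (Fin 2 ⊕ Fin 3) (Fin 2 ⊕ Fin 3) ℝ)
    (hG : G = Matrix.fromBlocks (Y5.map Complex.re) (Y6.map Complex.re)
      ((Y6.map Complex.re)ᵀ)
      (Y4.map Complex.re + ε • (1 : Matrix (Fin 3) (Fin 3) ℝ))) :
    ∀ x : Fin 2 ⊕ Fin 3 → ℝ, x ≠ 0 → 0 < x ⬝ᵥ (G *ᵥ x) := by
  subst hG hY4 hY5 hY6
  intro x hx
  have h1 : (yt / 3).re = yt.re / 3 := by
    rw [show ((3:ℂ)) = ((3:ℝ):ℂ) by norm_num, Complex.div_ofReal_re]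
  have h2 : (yt / (Real.sqrt 3 : ℂ)).re = yt.re / Real.sqrt 3 := Complex.div_ofReal_re _ _
  simp only [dotProduct, mulVec, Fintype.sum_sum_type, fromBlocks_apply₁₁,
    fromBlocks_apply₁₂, fromBlocks_apply₂₁, fromBlocks_apply₂₂, Fin.sum_univ_succ,
    Fin.sum_univ_zero, Matrix.map_apply, Matrix.smul_apply, Matrix.add_apply,
    Matrix.one_apply, Matrix.transpose_apply, Matrix.cons_val_zero, Matrix.cons_val_one,
    Matrix.head_cons, Matrix.cons_val', Matrix.empty_val', Matrix.cons_val_fin_one,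
    Matrix.head_fin_const, smul_eq_mul, Complex.mul_re, Complex.ofReal_re,
    Fin.succ_zero_eq_one, Fin.succ_one_eq_two, Matrix.cons_val_two, Matrix.tail_cons, Matrix.of_apply]
  norm_num [h1, h2, Fin.ext_iff]
  set a := x (Sum.inl 0) with ha
  set b := x (Sum.inl 1) with hb
  set u := x (Sum.inr 0) with hu
  set v := x (Sum.inr 1) with hv
  set w := x (Sum.inr 2) with hw
  set t := Real.sqrt 3 with htdef
  have ht0 : 0 < t := Real.sqrt_pos.mpr (by norm_num)
  have ht : t ^ 2 = 3 := Real.sq_sqrt (by norm_num)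
  have hdiv : ∀ z : ℝ, z / t = z * t / 3 := by
    intro z
    rw [div_eq_div_iff ht0.ne' (by norm_num : (3:ℝ) ≠ 0)]
    linear_combination -z * ht
  have key : a * (yt.re * a + (-(yt.re / t * u) + yt.re / t * v)) + b * (yt.re * b + (-(yt.re / t * v) + yt.re / t * w)) +
      (u * (-(yt.re / t * a) + ((yt.re / 3 + ε) * u + -(yt.re / 3 * v))) +
        (v * (yt.re / t * a + -(yt.re / t * b) + (-(yt.re / 3 * u) + ((yt.re / 3 * 2 + ε) * v + -(yt.re / 3 * w)))) +
          w * (yt.re / t * b + (-(yt.re / 3 * v) + (yt.re / 3 + ε) * w))))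
      = yt.re * (a + (v - u) / t) ^ 2 + yt.re * (b + (w - v) / t) ^ 2
        + ε * (u ^ 2 + v ^ 2 + w ^ 2) := by
    simp only [hdiv]
    linear_combination (-(yt.re * (v - u) ^ 2 / 9) - yt.re * (w - v) ^ 2 / 9) * ht
  rw [key]
  by_contra hle
  push_neg at hle
  have e1 : 0 ≤ yt.re * (a + (v - u) / t) ^ 2 := by positivity
  have e2 : 0 ≤ yt.re * (b + (w - v) / t) ^ 2 := by positivity
  have e3 : 0 ≤ ε * (u ^ 2 + v ^ 2 + w ^ 2) := by positivity
  have hS : u ^ 2 + v ^ 2 + w ^ 2 = 0 := by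
    have h4 : ε * (u ^ 2 + v ^ 2 + w ^ 2) = 0 :=
      le_antisymm (by linarith) (mul_nonneg hε.le (by positivity))
    exact (mul_eq_zero.mp h4).resolve_left hε.ne'
  have hu0 : u = 0 := by
    have : u ^ 2 = 0 := by linarith [sq_nonneg u, sq_nonneg v, sq_nonneg w]
    exact pow_eq_zero_iff (by norm_num) |>.mp this
  have hv0 : v = 0 := by
    have : v ^ 2 = 0 := by linarith [sq_nonneg u, sq_nonneg v, sq_nonneg w]
    exact pow_eq_zero_iff (by norm_num) |>.mp this
  have hw0 : w = 0 := by
    have : w ^ 2 = 0 := by linarith [sq_nonneg u, sq_nonneg v, sq_nonneg w]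
    exact pow_eq_zero_iff (by norm_num) |>.mp this
  rw [hu0, hv0, hw0] at hle
  simp only [sub_zero, zero_sub, neg_zero, zero_div, add_zero] at hle
  norm_num at hle
  have ha0 : a = 0 := by
    have : a ^ 2 = 0 := by nlinarith [sq_nonneg b, mul_nonneg h.le (sq_nonneg a), mul_nonneg h.le (sq_nonneg b)]
    exact pow_eq_zero_iff (by norm_num) |>.mp this
  have hb0 : b = 0 := by
    have : b ^ 2 = 0 := by nlinarith [sq_nonneg a, mul_nonneg h.le (sq_nonneg a), mul_nonneg h.le (sq_nonneg b)]
    exact pow_eq_zero_iff (by norm_num) |>.mp this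
  apply hx
  funext i
  rcases i with i | i <;> fin_cases i
  exacts [ha0, hb0, hu0, hv0, hw0]
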